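/- If 𝔽 and 𝔊 are maximal closed generalized flags in V whose stabilizers in 𝔰𝔩(V,V_*) satisfy St_𝔽 ⊆ St_𝔊, then 𝔽 = 𝔊. -/

import Mathlib

open TensorProduct

/-- The perpendicular complement of a subspace with respect to a pairing. -/
def perp {X Y : Type*} [AddCommGroup X] [Module ℂ X] [AddCommGroup Y] [Module ℂ Y]
    (B : X →ₗ[ℂ] Y →ₗ[ℂ] ℂ) (F : Submodule ℂ X) : Submodule ℂ Y where
  carrier := {y | ∀ x ∈ F, B x y = 0}
  add_mem' := by intro a b ha hb x hx; simp [map_add, ha x hx, hb x hx]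
  zero_mem' := by intro x hx; simp
  smul_mem' := by intro c a ha x hx; simp [ha x hx]

/-- The closure of a subspace of `V` with respect to the pairing:
its double perpendicular complement. -/
def clos {X Y : Type*} [AddCommGroup X] [Module ℂ X] [AddCommGroup Y] [Module ℂ Y]
    (B : X →ₗ[ℂ] Y →ₗ[ℂ] ℂ) (F : Submodule ℂ X) : Submodule ℂ X :=
  perp B.flip (perp B F)

/-- `F` and `G` form an immediate predecessor-successor pair of the chain `C`. -/
def ImmPair {V : Type*} [AddCommGroup V] [Module ℂ V]
    (C : Set (Submodule ℂ V)) (F G : Submodule ℂ V) : Prop :=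
  F ∈ C ∧ G ∈ C ∧ F < G ∧ ∀ H ∈ C, ¬(F < H ∧ H < G)

/-- A generalized flag in `V`. -/
structure GenFlag (V : Type*) [AddCommGroup V] [Module ℂ V] where
  carrier : Set (Submodule ℂ V)
  chain : IsChain (· ≤ ·) carrier
  neighbor : ∀ F ∈ carrier,
    (∃ G, ImmPair carrier G F) ∨ (∃ G, ImmPair carrier F G)
  covers : ∀ x : V, x ≠ 0 → ∃ F G, ImmPair carrier F G ∧ x ∈ G ∧ x ∉ F

/-- A closed generalized flag: every immediate successor is closed, and the
closure of every immediate predecessor is either itself or its successor. -/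
def GenFlag.IsClosed {V Y : Type*} [AddCommGroup V] [Module ℂ V]
    [AddCommGroup Y] [Module ℂ Y] (B : V →ₗ[ℂ] Y →ₗ[ℂ] ℂ) (𝔽 : GenFlag V) : Prop :=
  ∀ F G : Submodule ℂ V, ImmPair 𝔽.carrier F G →
    clos B G = G ∧ (clos B F = F ∨ clos B F = G)

/-- A good pair of a closed generalized flag: an immediate
predecessor-successor pair whose predecessor is closed. -/
def GoodPair {V Y : Type*} [AddCommGroup V] [Module ℂ V]
    [AddCommGroup Y] [Module ℂ Y] (B : V →ₗ[ℂ] Y →ₗ[ℂ] ℂ)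
    (C : Set (Submodule ℂ V)) (F G : Submodule ℂ V) : Prop :=
  ImmPair C F G ∧ clos B F = F

/-- A maximal closed generalized flag: a closed generalized flag in which
every good pair has codimension one. -/
def GenFlag.IsMaxClosed {V Y : Type*} [AddCommGroup V] [Module ℂ V]
    [AddCommGroup Y] [Module ℂ Y] (B : V →ₗ[ℂ] Y →ₗ[ℂ] ℂ) (𝔽 : GenFlag V) : Prop :=
  𝔽.IsClosed B ∧ ∀ F G : Submodule ℂ V, GoodPair B 𝔽.carrier F G →
    Module.rank ℂ (↥G ⧸ (F.comap G.subtype)) = 1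

/-- The action of `𝔤𝔩(V,V_*) = V ⊗ V_*` on `V`: `(v ⊗ w) · u = ⟨u, w⟩ v`. -/
noncomputable def toEnd {V W : Type*} [AddCommGroup V] [Module ℂ V]
    [AddCommGroup W] [Module ℂ W] (B : V →ₗ[ℂ] W →ₗ[ℂ] ℂ) :
    V ⊗[ℂ] W →ₗ[ℂ] Module.End ℂ V :=
  TensorProduct.lift <| LinearMap.mk₂ ℂ (fun v w => (B.flip w).smulRight v)
    (fun v v' w => by ext u; simp)
    (fun c v w => by ext u; exact smul_comm _ _ _)
    (fun v w w' => by ext u; simp [add_smul])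
    (fun c v w => by ext u; simp [smul_smul, mul_comm])

attribute [local instance 100] LieRing.ofAssociativeRing

/-- `𝔰𝔩(V,V_*)`, the commutator subalgebra `[𝔤𝔩(V,V_*), 𝔤𝔩(V,V_*)]` of
`𝔤𝔩(V,V_*) = V ⊗ V_*`, realized inside `End V`: the Lie subalgebra generated
by brackets of elements of `V ⊗ V_*`. -/
noncomputable def slB {V W : Type*} [AddCommGroup V] [Module ℂ V]
    [AddCommGroup W] [Module ℂ W] (B : V →ₗ[ℂ] W →ₗ[ℂ] ℂ) :
    LieSubalgebra ℂ (Module.End ℂ V) :=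
  LieSubalgebra.lieSpan ℂ (Module.End ℂ V)
    {z | ∃ t s : V ⊗[ℂ] W, z = ⁅toEnd B t, toEnd B s⁆}

/-- The stabilizer in `𝔰𝔩(V,V_*)` of a family `C` of subspaces of `V`,
as a subset of `End V`. -/
noncomputable def slStab {V W : Type*} [AddCommGroup V] [Module ℂ V]
    [AddCommGroup W] [Module ℂ W] (B : V →ₗ[ℂ] W →ₗ[ℂ] ℂ)
    (C : Set (Submodule ℂ V)) : Set (Module.End ℂ V) :=
  {f | f ∈ slB B ∧ ∀ F ∈ C, ∀ x ∈ F, f x ∈ F}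

section AuxProofSection


variable {V W : Type*} [AddCommGroup V] [Module ℂ V] [AddCommGroup W] [Module ℂ W]
  (B : V →ₗ[ℂ] W →ₗ[ℂ] ℂ)

lemma mem_clos_iff {S : Submodule ℂ V} {v : V} :
    v ∈ clos B S ↔ ∀ w ∈ perp B S, B v w = 0 := Iff.rfl

lemma toEnd_tmul (v : V) (w : W) (u : V) : toEnd B (v ⊗ₜ[ℂ] w) u = B u w • v := by
  simp [toEnd]

lemma perp_antitone {S T : Submodule ℂ V} (h : S ≤ T) : perp B T ≤ perp B S :=
  fun w hw x hx => hw x (h hx)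

lemma perp_eq_of_clos {F G : Submodule ℂ V} (h : clos B F = G) (hle : F ≤ G) :
    perp B F = perp B G :=
  le_antisymm (fun w hw g hg => (mem_clos_iff B).mp (h ▸ hg : g ∈ clos B F) w hw)
    (perp_antitone B hle)

lemma stab_mem (hB₁ : ∀ v : V, (∀ w : W, B v w = 0) → v = 0)
    (𝔽 : GenFlag V) {F G : Submodule ℂ V} (hFG : ImmPair 𝔽.carrier F G)
    {y : V} (hyG : y ∈ G) (hyF : y ∉ F) {w : W} (hw : w ∈ perp B G) :
    toEnd B (y ⊗ₜ[ℂ] w) ∈ slStab B 𝔽.carrier := by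
  have hy0 : y ≠ 0 := fun h => hyF (h ▸ F.zero_mem)
  obtain ⟨w₀, hw₀⟩ : ∃ w₀, B y w₀ ≠ 0 := by
    by_contra h; push_neg at h; exact hy0 (hB₁ y h)
  have hyw : B y w = 0 := hw y hyG
  constructor
  · apply LieSubalgebra.subset_lieSpan
    refine ⟨y ⊗ₜ w₀, ((B y w₀)⁻¹ • y) ⊗ₜ w, ?_⟩
    ext u
    rw [Ring.lie_def]
    simp only [LinearMap.sub_apply, Module.End.mul_apply, toEnd_tmul, map_smul,
      LinearMap.smul_apply, smul_eq_mul, smul_smul, hyw, mul_zero, zero_mul, zero_smul,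
      sub_zero, mul_comm, mul_assoc, mul_left_comm, inv_mul_cancel₀ hw₀, mul_one]
    rw [smul_zero, sub_zero]
    congr 1
    field_simp
  · intro F' hF' x hx
    by_cases hyF' : y ∈ F'
    · rw [toEnd_tmul]; exact F'.smul_mem _ hyF'
    · have hF'G : F' ≤ G := by
        rcases 𝔽.chain.total hF' hFG.2.1 with h | h
        · exact h
        · exact absurd (h hyG) hyF'
      rw [toEnd_tmul, hw x (hF'G hx), zero_smul]
      exact F'.zero_mem

lemma claimA (hB₁ : ∀ v : V, (∀ w : W, B v w = 0) → v = 0)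
    (𝔽 : GenFlag V) {U : Submodule ℂ V}
    (hU : ∀ f ∈ slStab B 𝔽.carrier, ∀ x ∈ U, f x ∈ U)
    {F G : Submodule ℂ V} (hFG : ImmPair 𝔽.carrier F G)
    {y : V} (hyG : y ∈ G) (hyF : y ∉ F) (hclos : clos B G = G)
    {x : V} (hxU : x ∈ U) (hxG : x ∉ G) : y ∈ U := by
  have hx' : x ∉ clos B G := fun h => hxG (hclos ▸ h)
  rw [mem_clos_iff] at hx'
  push_neg at hx'
  obtain ⟨w, hwG, hxw⟩ := hx'
  have hf := stab_mem B hB₁ 𝔽 hFG hyG hyF hwG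
  have h1 := hU _ hf x hxU
  rw [toEnd_tmul] at h1
  have h2 := U.smul_mem (B x w)⁻¹ h1
  rwa [smul_smul, inv_mul_cancel₀ hxw, one_smul] at h2

lemma succ_le_of_mem (𝔽 : GenFlag V) {F G M : Submodule ℂ V}
    (hFG : ImmPair 𝔽.carrier F G) {y : V} (hyG : y ∈ G) (hyF : y ∉ F)
    (hM : M ∈ 𝔽.carrier) (hyM : y ∈ M) : G ≤ M := by
  have hFM : F < M :=
    lt_of_le_of_ne (Or.resolve_right (𝔽.chain.total hFG.1 hM) fun h => hyF (h hyM))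
      (fun h => hyF (h ▸ hyM))
  rcases 𝔽.chain.total hM hFG.2.1 with h | h
  · rcases eq_or_lt_of_le h with h' | h'
    · exact h'.ge
    · exact absurd ⟨hFM, h'⟩ (hFG.2.2.2 M hM)
  · exact h

lemma inv_comparable (hB₁ : ∀ v : V, (∀ w : W, B v w = 0) → v = 0)
    (𝔽 : GenFlag V) (hcl : 𝔽.IsClosed B)
    {U : Submodule ℂ V} (hU : ∀ f ∈ slStab B 𝔽.carrier, ∀ x ∈ U, f x ∈ U)
    {F0 : Submodule ℂ V} (hF0 : F0 ∈ 𝔽.carrier) : U ≤ F0 ∨ F0 ≤ U := by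
  by_contra h
  push_neg at h
  obtain ⟨h1, h2⟩ := h
  obtain ⟨x, hxU, hxF0⟩ := SetLike.not_le_iff_exists.mp h1
  obtain ⟨y, hyF0, hyU⟩ := SetLike.not_le_iff_exists.mp h2
  have hy0 : y ≠ 0 := fun h => hyU (h ▸ U.zero_mem)
  obtain ⟨F1, G1, hp, hyG1, hyF1⟩ := 𝔽.covers y hy0
  have hG1F0 : G1 ≤ F0 := succ_le_of_mem 𝔽 hp hyG1 hyF1 hF0 hyF0
  have hxG1 : x ∉ G1 := fun h => hxF0 (hG1F0 h)
  exact hyU (claimA B hB₁ 𝔽 hU hp hyG1 hyF1 (hcl _ _ hp).1 hxU hxG1)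

lemma no_strict_between_of_rank_one {F G U : Submodule ℂ V}
    (hr : Module.rank ℂ (↥G ⧸ (F.comap G.subtype)) = 1)
    (h1 : F < U) (h2 : U < G) : False := by
  obtain ⟨u, huU, huF⟩ := SetLike.exists_of_lt h1
  obtain ⟨g, hgG, hgU⟩ := SetLike.exists_of_lt h2
  have huG : u ∈ G := h2.le huU
  obtain ⟨v₀, hv₀⟩ := rank_le_one_iff.mp hr.le
  obtain ⟨a, ha⟩ := hv₀ (Submodule.Quotient.mk (p := F.comap G.subtype) ⟨u, huG⟩)
  obtain ⟨b, hb⟩ := hv₀ (Submodule.Quotient.mk (p := F.comap G.subtype) ⟨g, hgG⟩)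
  have ha0 : a ≠ 0 := by
    rintro rfl
    rw [zero_smul] at ha
    exact huF ((Submodule.Quotient.mk_eq_zero (F.comap G.subtype)).mp ha.symm)
  have hq : Submodule.Quotient.mk (p := F.comap G.subtype) (⟨g, hgG⟩ - (b * a⁻¹) • ⟨u, huG⟩) = 0 := by
    rw [Submodule.Quotient.mk_sub, Submodule.Quotient.mk_smul, ← hb, ← ha, smul_smul]
    rw [mul_assoc, inv_mul_cancel₀ ha0, mul_one, sub_self]
  have hmem : g - (b * a⁻¹) • u ∈ F := (Submodule.Quotient.mk_eq_zero (F.comap G.subtype)).mp hq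
  have : g ∈ U := by
    have h3 := U.add_mem (h1.le hmem) (U.smul_mem (b * a⁻¹) huU)
    simpa using h3
  exact hgU this

lemma not_between_F (hB₁ : ∀ v : V, (∀ w : W, B v w = 0) → v = 0)
    (𝔽 𝔊 : GenFlag V) (h𝔽 : 𝔽.IsMaxClosed B) (h𝔊 : 𝔊.IsMaxClosed B)
    (hInv : ∀ U ∈ 𝔊.carrier, ∀ f ∈ slStab B 𝔽.carrier, ∀ x ∈ U, f x ∈ U)
    {F G U : Submodule ℂ V} (hFG : ImmPair 𝔽.carrier F G) (hU : U ∈ 𝔊.carrier)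
    (h1 : F < U) (h2 : U < G) : False := by
  obtain ⟨hclosG, hclosF⟩ := h𝔽.1 F G hFG
  rcases hclosF with hF | hF
  · exact no_strict_between_of_rank_one (h𝔽.2 F G ⟨hFG, hF⟩) h1 h2
  · obtain ⟨x, hxU, hxF⟩ := SetLike.exists_of_lt h1
    have hx0 : x ≠ 0 := fun h => hxF (h ▸ F.zero_mem)
    obtain ⟨F₂, G₂, hp₂, hxG₂, hxF₂⟩ := 𝔊.covers x hx0
    have hG₂U : G₂ ≤ U := succ_le_of_mem 𝔊 hp₂ hxG₂ hxF₂ hU hxU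
    have hFG₂ : F ≤ G₂ := by
      rcases inv_comparable B hB₁ 𝔽 h𝔽.1 (hInv _ hp₂.2.1) hFG.1 with h | h
      · exact absurd (h hxG₂) hxF
      · exact h
    have hperp : perp B F = perp B G := perp_eq_of_clos B hF (h1.le.trans h2.le)
    have hperp₂ : perp B G₂ = perp B G := le_antisymm
      (by rw [← hperp]; exact perp_antitone B hFG₂)
      (perp_antitone B (hG₂U.trans h2.le))
    have hG₂G : G₂ = G := by
      have hc := (h𝔊.1 F₂ G₂ hp₂).1
      rw [← hc]
      show perp B.flip (perp B G₂) = G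
      rw [hperp₂]
      exact hclosG
    exact absurd (hG₂G ▸ hG₂U) h2.not_ge

lemma not_between_G (hB₁ : ∀ v : V, (∀ w : W, B v w = 0) → v = 0)
    (𝔽 𝔊 : GenFlag V) (h𝔽 : 𝔽.IsMaxClosed B) (h𝔊 : 𝔊.IsMaxClosed B)
    (hInv : ∀ U ∈ 𝔊.carrier, ∀ f ∈ slStab B 𝔽.carrier, ∀ x ∈ U, f x ∈ U)
    {F G F0 : Submodule ℂ V} (hFG : ImmPair 𝔊.carrier F G) (hF0 : F0 ∈ 𝔽.carrier)
    (h1 : F < F0) (h2 : F0 < G) : False := by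
  obtain ⟨hclosG, hclosF⟩ := h𝔊.1 F G hFG
  rcases hclosF with hF | hF
  · exact no_strict_between_of_rank_one (h𝔊.2 F G ⟨hFG, hF⟩) h1 h2
  · obtain ⟨x, hxF0, hxF⟩ := SetLike.exists_of_lt h1
    have hx0 : x ≠ 0 := fun h => hxF (h ▸ F.zero_mem)
    obtain ⟨F₁, G₁, hp₁, hxG₁, hxF₁⟩ := 𝔽.covers x hx0
    have hG₁F0 : G₁ ≤ F0 := succ_le_of_mem 𝔽 hp₁ hxG₁ hxF₁ hF0 hxF0
    have hFG₁ : F ≤ G₁ := by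
      rcases inv_comparable B hB₁ 𝔽 h𝔽.1 (hInv _ hFG.1) hp₁.2.1 with h | h
      · exact h
      · exact absurd (h hxG₁) hxF
    have hperp : perp B F = perp B G := perp_eq_of_clos B hF (h1.le.trans h2.le)
    have hperp₁ : perp B G₁ = perp B G := le_antisymm
      (by rw [← hperp]; exact perp_antitone B hFG₁)
      (perp_antitone B (hG₁F0.trans h2.le))
    have hG₁G : G₁ = G := by
      have hc := (h𝔽.1 F₁ G₁ hp₁).1
      rw [← hc]
      show perp B.flip (perp B G₁) = G
      rw [hperp₁]
      exact hclosG
    exact absurd (hG₁G ▸ hG₁F0) h2.not_ge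

lemma GenFlag.ext' {𝔽 𝔊 : GenFlag V} (h : 𝔽.carrier = 𝔊.carrier) : 𝔽 = 𝔊 := by
  cases 𝔽 with
  | mk c ch ne co =>
    cases 𝔊 with
    | mk c' ch' ne' co' =>
      have h' : c = c' := h
      subst h'
      rfl

theorem maxClosedFlag_eq_of_slStab_le' 
    (hB₁ : ∀ v : V, (∀ w : W, B v w = 0) → v = 0)
    (𝔽 𝔊 : GenFlag V) (h𝔽 : 𝔽.IsMaxClosed B) (h𝔊 : 𝔊.IsMaxClosed B)
    (hst : slStab B 𝔽.carrier ⊆ slStab B 𝔊.carrier) :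
    𝔽 = 𝔊 := by
  have hInv : ∀ U ∈ 𝔊.carrier, ∀ f ∈ slStab B 𝔽.carrier, ∀ x ∈ U, f x ∈ U :=
    fun U hU f hf x hx => (hst hf).2 U hU x hx
  apply GenFlag.ext'
  ext F0
  constructor
  · intro hF0
    by_contra hF0G
    rcases 𝔽.neighbor F0 hF0 with ⟨F0m, hpm⟩ | ⟨F0p, hpp⟩
    · obtain ⟨x, hxF0, hxm⟩ := SetLike.exists_of_lt hpm.2.2.1
      have hx0 : x ≠ 0 := fun h => hxm (h ▸ F0m.zero_mem)
      obtain ⟨F₂, G₂, hp₂, hxG₂, hxF₂⟩ := 𝔊.covers x hx0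
      have hG₂F0 : G₂ < F0 := by
        rcases inv_comparable B hB₁ 𝔽 h𝔽.1 (hInv _ hp₂.2.1) hF0 with h | h
        · exact lt_of_le_of_ne h (fun he => hF0G (by rw [← he]; exact hp₂.2.1))
        · exfalso
          have hF0G₂ : F0 < G₂ := lt_of_le_of_ne h (fun he => hF0G (by rw [he]; exact hp₂.2.1))
          have hF₂F0 : F₂ < F0 := by
            rcases inv_comparable B hB₁ 𝔽 h𝔽.1 (hInv _ hp₂.1) hF0 with h' | h'
            · exact lt_of_le_of_ne h' (fun he => hxF₂ (by rw [he]; exact hxF0))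
            · exact absurd (h' hxF0) hxF₂
          exact not_between_G B hB₁ 𝔽 𝔊 h𝔽 h𝔊 hInv hp₂ hF0 hF₂F0 hF0G₂
      have hmG₂ : F0m < G₂ := by
        rcases inv_comparable B hB₁ 𝔽 h𝔽.1 (hInv _ hp₂.2.1) hpm.1 with h | h
        · exact absurd (h hxG₂) hxm
        · exact lt_of_le_of_ne h (fun he => hxm (by rw [he]; exact hxG₂))
      exact absurd (not_between_F B hB₁ 𝔽 𝔊 h𝔽 h𝔊 hInv hpm hp₂.2.1 hmG₂ hG₂F0) not_false
    · obtain ⟨x, hxp, hxF0⟩ := SetLike.exists_of_lt hpp.2.2.1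
      have hx0 : x ≠ 0 := fun h => hxF0 (h ▸ F0.zero_mem)
      obtain ⟨F₂, G₂, hp₂, hxG₂, hxF₂⟩ := 𝔊.covers x hx0
      have hF0G₂ : F0 < G₂ := by
        rcases inv_comparable B hB₁ 𝔽 h𝔽.1 (hInv _ hp₂.2.1) hF0 with h | h
        · exact absurd (h hxG₂) hxF0
        · exact lt_of_le_of_ne h (fun he => hF0G (by rw [he]; exact hp₂.2.1))
      have hF0F₂ : F0 < F₂ := by
        rcases inv_comparable B hB₁ 𝔽 h𝔽.1 (hInv _ hp₂.1) hF0 with h | h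
        · exfalso
          have hF₂F0 : F₂ < F0 := lt_of_le_of_ne h (fun he => hF0G (by rw [← he]; exact hp₂.1))
          exact not_between_G B hB₁ 𝔽 𝔊 h𝔽 h𝔊 hInv hp₂ hF0 hF₂F0 hF0G₂
        · exact lt_of_le_of_ne h (fun he => hF0G (by rw [he]; exact hp₂.1))
      have hF₂F0p : F₂ < F0p := by
        rcases inv_comparable B hB₁ 𝔽 h𝔽.1 (hInv _ hp₂.1) hpp.2.1 with h | h
        · exact lt_of_le_of_ne h (fun he => hxF₂ (by rw [he]; exact hxp))
        · exact absurd (h hxp) hxF₂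
      exact absurd (not_between_F B hB₁ 𝔽 𝔊 h𝔽 h𝔊 hInv hpp hp₂.1 hF0F₂ hF₂F0p) not_false
  · intro hU
    by_contra hUF
    rcases 𝔊.neighbor F0 hU with ⟨Um, hpm⟩ | ⟨Up, hpp⟩
    · obtain ⟨x, hxF0, hxm⟩ := SetLike.exists_of_lt hpm.2.2.1
      have hx0 : x ≠ 0 := fun h => hxm (h ▸ Um.zero_mem)
      obtain ⟨F₁, G₁, hp₁, hxG₁, hxF₁⟩ := 𝔽.covers x hx0
      have hG₁F0 : G₁ < F0 := by
        rcases inv_comparable B hB₁ 𝔽 h𝔽.1 (hInv _ hU) hp₁.2.1 with h | h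
        · exfalso
          have h2 : F0 < G₁ := lt_of_le_of_ne h (fun he => hUF (by rw [he]; exact hp₁.2.1))
          have h1 : F₁ < F0 := by
            rcases inv_comparable B hB₁ 𝔽 h𝔽.1 (hInv _ hU) hp₁.1 with h' | h'
            · exact absurd (h' hxF0) hxF₁
            · exact lt_of_le_of_ne h' (fun he => hxF₁ (by rw [he]; exact hxF0))
          exact not_between_F B hB₁ 𝔽 𝔊 h𝔽 h𝔊 hInv hp₁ hU h1 h2
        · exact lt_of_le_of_ne h (fun he => hUF (by rw [← he]; exact hp₁.2.1))
      have hUmG₁ : Um < G₁ := by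
        rcases inv_comparable B hB₁ 𝔽 h𝔽.1 (hInv _ hpm.1) hp₁.2.1 with h | h
        · exact lt_of_le_of_ne h (fun he => hxm (by rw [he]; exact hxG₁))
        · exact absurd (h hxG₁) hxm
      exact absurd (not_between_G B hB₁ 𝔽 𝔊 h𝔽 h𝔊 hInv hpm hp₁.2.1 hUmG₁ hG₁F0) not_false
    · obtain ⟨x, hxp, hxF0⟩ := SetLike.exists_of_lt hpp.2.2.1
      have hx0 : x ≠ 0 := fun h => hxF0 (h ▸ F0.zero_mem)
      obtain ⟨F₁, G₁, hp₁, hxG₁, hxF₁⟩ := 𝔽.covers x hx0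
      have hF0G₁ : F0 < G₁ := by
        rcases inv_comparable B hB₁ 𝔽 h𝔽.1 (hInv _ hU) hp₁.2.1 with h | h
        · exact lt_of_le_of_ne h (fun he => hUF (by rw [he]; exact hp₁.2.1))
        · exact absurd (h hxG₁) hxF0
      have hF0F₁ : F0 < F₁ := by
        rcases inv_comparable B hB₁ 𝔽 h𝔽.1 (hInv _ hU) hp₁.1 with h | h
        · exact lt_of_le_of_ne h (fun he => hUF (by rw [he]; exact hp₁.1))
        · exfalso
          have h1 : F₁ < F0 := lt_of_le_of_ne h (fun he => hUF (by rw [← he]; exact hp₁.1))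
          exact not_between_F B hB₁ 𝔽 𝔊 h𝔽 h𝔊 hInv hp₁ hU h1 hF0G₁
      have hF₁Up : F₁ < Up := by
        rcases inv_comparable B hB₁ 𝔽 h𝔽.1 (hInv _ hpp.2.1) hp₁.1 with h | h
        · exact absurd (h hxp) hxF₁
        · exact lt_of_le_of_ne h (fun he => hxF₁ (by rw [he]; exact hxp))
      exact absurd (not_between_G B hB₁ 𝔽 𝔊 h𝔽 h𝔊 hInv hpp hp₁.1 hF0F₁ hF₁Up) not_false

end AuxProofSection

/-- if `𝔽` and `𝔊` are maximal closed generalized flags in `V`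
whose stabilizers in `𝔰𝔩(V,V_*)` satisfy `St_𝔽 ⊆ St_𝔊`, then `𝔽 = 𝔊`. -/
theorem maxClosedFlag_eq_of_slStab_le {V W : Type*} [AddCommGroup V] [Module ℂ V]
    [AddCommGroup W] [Module ℂ W]
    (hV : Module.rank ℂ V ≤ Cardinal.aleph0)
    (hW : Module.rank ℂ W ≤ Cardinal.aleph0)
    (B : V →ₗ[ℂ] W →ₗ[ℂ] ℂ)
    (hB₁ : ∀ v : V, (∀ w : W, B v w = 0) → v = 0)
    (hB₂ : ∀ w : W, (∀ v : V, B v w = 0) → w = 0)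
    (𝔽 𝔊 : GenFlag V) (h𝔽 : 𝔽.IsMaxClosed B) (h𝔊 : 𝔊.IsMaxClosed B)
    (hst : slStab B 𝔽.carrier ⊆ slStab B 𝔊.carrier) :
    𝔽 = 𝔊 := by
  exact maxClosedFlag_eq_of_slStab_le' B hB₁ 𝔽 𝔊 h𝔽 h𝔊 hst
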